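/- Let (a_n) be nonnegative reals with a_n ~ c·ρ^{−n}·n^{−3/2} (c > 0, ρ > 0), and f(x) = ∑ a_n x^n bounded by M on (0, ρ). Fix ε ∈ (0,1), set x_n = (1 − 1/(2n))·ρ and π_{n,ε} = (∑_{k=⌈n(1−ε)⌉}^{⌊n(1+ε)⌋} a_k·x_n^k) / f(x_n). Then there exist c' > 0 and N such that π_{n,ε} ≥ c'·ε·n^{−1/2} for all n ≥ N. In particular 1/π_{n,ε} = O(n^{1/2}/ε). -/

import Mathlib

open Filter

set_option maxHeartbeats 1000000 in
/-- If `a_n ~ c·ρ^{−n}·n^{−3/2}` and `f(x) = ∑ a_n x^n ≤ M` on `(0,ρ)`, then for fixed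
`ε ∈ (0,1)` and `x_n = (1 − 1/(2n))·ρ`, the window probability
`π_{n,ε} = (∑_{k=⌈n(1−ε)⌉}^{⌊n(1+ε)⌋} a_k x_n^k)/f(x_n)` satisfies
`π_{n,ε} ≥ c'·ε·n^{−1/2}` for `n` large: `1/π_{n,ε} = O(n^{1/2}/ε)`. -/
theorem approximate_size_hitting_probability (a : ℕ → ℝ) (c ρ M ε : ℝ)
    (hc : 0 < c) (hρ : 0 < ρ) (hε0 : 0 < ε) (hε1 : ε < 1)
    (ha0 : ∀ n, 0 ≤ a n)
    (hasym : Tendsto (fun n : ℕ => a n * ρ ^ n * (n : ℝ) ^ ((3 : ℝ) / 2)) atTop (nhds c))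
    (hsum : ∀ x : ℝ, 0 < x → x < ρ → Summable (fun n : ℕ => a n * x ^ n))
    (hbound : ∀ x : ℝ, 0 < x → x < ρ → (∑' n : ℕ, a n * x ^ n) ≤ M) :
    ∃ c' > (0 : ℝ), ∃ N : ℕ, ∀ n ≥ N,
      (∑ k ∈ Finset.Icc ⌈(n : ℝ) * (1 - ε)⌉₊ ⌊(n : ℝ) * (1 + ε)⌋₊,
          a k * ((1 - 1 / (2 * (n : ℝ))) * ρ) ^ k)
          / (∑' k : ℕ, a k * ((1 - 1 / (2 * (n : ℝ))) * ρ) ^ k)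
        ≥ c' * ε * (n : ℝ) ^ (-(1 : ℝ) / 2) := by
  -- eventual lower bound from the asymptotics
  obtain ⟨K0, hK0⟩ : ∃ K0 : ℕ, ∀ k ≥ K0, c / 2 ≤ a k * ρ ^ k * (k : ℝ) ^ ((3 : ℝ) / 2) := by
    have h := hasym.eventually (eventually_ge_nhds (show c / 2 < c by linarith))
    exact eventually_atTop.mp h
  -- M is positive
  have hM : 0 < M := by
    have hk1 := hK0 (K0 + 1) (Nat.le_succ _)
    have ha1 : 0 < a (K0 + 1) := by
      rcases lt_or_eq_of_le (ha0 (K0 + 1)) with h | h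
      · exact h
      · exfalso
        rw [← h] at hk1
        simp at hk1
        linarith
    have h1 : 0 < ρ / 2 := by linarith
    have h2 : ρ / 2 < ρ := by linarith
    have hterm : 0 < a (K0 + 1) * (ρ / 2) ^ (K0 + 1) := mul_pos ha1 (pow_pos h1 _)
    have hle : a (K0 + 1) * (ρ / 2) ^ (K0 + 1) ≤ ∑' n : ℕ, a n * (ρ / 2) ^ n :=
      Summable.le_tsum (hsum _ h1 h2) _ (fun k _ => mul_nonneg (ha0 k) (pow_nonneg h1.le _))
    linarith [hbound _ h1 h2]
  refine ⟨c / (32 * M), by positivity, max (⌈2 / ε⌉₊ + 1) (⌈(K0 : ℝ) / (1 - ε)⌉₊ + 1),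
    fun n hn => ?_⟩
  have hn1 : ⌈2 / ε⌉₊ + 1 ≤ n := le_trans (le_max_left _ _) hn
  have hn2 : ⌈(K0 : ℝ) / (1 - ε)⌉₊ + 1 ≤ n := le_trans (le_max_right _ _) hn
  have hnge : (2 : ℝ) / ε ≤ n := by
    have : ⌈2 / ε⌉₊ ≤ n := by omega
    exact_mod_cast Nat.ceil_le.mp this
  have hεn : 2 ≤ ε * n := by
    rw [div_le_iff₀ hε0] at hnge; linarith
  have hnpos : (0 : ℝ) < n := by nlinarith
  have hK0n : (K0 : ℝ) ≤ n * (1 - ε) := by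
    have h : ⌈(K0 : ℝ) / (1 - ε)⌉₊ ≤ n := by omega
    have h2 : (K0 : ℝ) / (1 - ε) ≤ n := by exact_mod_cast Nat.ceil_le.mp h
    rw [div_le_iff₀ (by linarith)] at h2; linarith
  have hn1' : (1 : ℝ) ≤ n := by nlinarith
  -- the tuned point
  set x : ℝ := (1 - 1 / (2 * (n : ℝ))) * ρ with hx
  have h2n : (0 : ℝ) < 2 * n := by linarith
  have hhalf : 1 / (2 * (n : ℝ)) ≤ 1 / 2 := by
    rw [div_le_div_iff₀ h2n (by norm_num)]; linarith
  have hinvpos : 0 < 1 / (2 * (n : ℝ)) := by positivity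
  have hbase0 : (0 : ℝ) ≤ 1 - 1 / (2 * (n : ℝ)) := by linarith
  have hbase1 : 1 - 1 / (2 * (n : ℝ)) ≤ 1 := by linarith
  have hx0 : 0 < x := by
    rw [hx]; nlinarith
  have hxρ : x < ρ := by
    rw [hx]; nlinarith
  set A : ℕ := ⌈(n : ℝ) * (1 - ε)⌉₊ with hA
  set B : ℕ := ⌊(n : ℝ) * (1 + ε)⌋₊ with hB
  have hAle : (A : ℝ) < n * (1 - ε) + 1 := Nat.ceil_lt_add_one (by nlinarith)
  have hAge : (n : ℝ) * (1 - ε) ≤ A := Nat.le_ceil _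
  have hBgt : (n : ℝ) * (1 + ε) - 1 < B := Nat.sub_one_lt_floor _
  have hBle : (B : ℝ) ≤ n * (1 + ε) := Nat.floor_le (by nlinarith)
  -- (1 - 1/(2n))^(2n) ≥ 1/4 via Bernoulli
  have hbern : (1 : ℝ) / 2 ≤ (1 - 1 / (2 * (n : ℝ))) ^ n := by
    have h := one_add_mul_le_pow (show (-2 : ℝ) ≤ -(1 / (2 * (n : ℝ))) by linarith) n
    have heq : 1 + (n : ℝ) * -(1 / (2 * (n : ℝ))) = 1 / 2 := by
      field_simp; ring
    rw [heq] at h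
    have : 1 + -(1 / (2 * (n : ℝ))) = 1 - 1 / (2 * (n : ℝ)) := by ring
    rwa [this] at h
  have hpow2n : (1 : ℝ) / 4 ≤ (1 - 1 / (2 * (n : ℝ))) ^ (2 * n) := by
    have : (1 - 1 / (2 * (n : ℝ))) ^ (2 * n) = ((1 - 1 / (2 * (n : ℝ))) ^ n) ^ 2 := by
      rw [← pow_mul]; ring_nf
    rw [this]
    nlinarith [pow_nonneg hbase0 n]
  -- per-term lower bound
  have hterm : ∀ k ∈ Finset.Icc A B,
      c / 32 * ((n : ℝ) ^ ((3 : ℝ) / 2))⁻¹ ≤ a k * x ^ k := by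
    intro k hk
    rw [Finset.mem_Icc] at hk
    have hkA : (A : ℝ) ≤ k := by exact_mod_cast hk.1
    have hkB : (k : ℝ) ≤ B := by exact_mod_cast hk.2
    have hkge : (K0 : ℝ) ≤ k := by linarith
    have hkK0 : K0 ≤ k := by exact_mod_cast hkge
    have hkpos : (0 : ℝ) < k := by nlinarith
    have hk2n : (k : ℝ) ≤ 2 * n := by nlinarith
    have hk2n' : k ≤ 2 * n := by exact_mod_cast (by push_cast; linarith : (k : ℝ) ≤ ((2 * n : ℕ) : ℝ))
    have hak := hK0 k hkK0
    have hk32pos : (0 : ℝ) < (k : ℝ) ^ ((3 : ℝ) / 2) := Real.rpow_pos_of_pos hkpos _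
    have hn32pos : (0 : ℝ) < (n : ℝ) ^ ((3 : ℝ) / 2) := Real.rpow_pos_of_pos hnpos _
    have step1 : c / 2 / ((2 * (n : ℝ)) ^ ((3 : ℝ) / 2)) ≤ a k * ρ ^ k := by
      have h1 : c / 2 / ((k : ℝ) ^ ((3 : ℝ) / 2)) ≤ a k * ρ ^ k :=
        (div_le_iff₀ hk32pos).mpr hak
      have h2 : (k : ℝ) ^ ((3 : ℝ) / 2) ≤ (2 * (n : ℝ)) ^ ((3 : ℝ) / 2) :=
        Real.rpow_le_rpow hkpos.le hk2n (by norm_num)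
      exact le_trans (div_le_div_of_nonneg_left (by linarith) hk32pos h2) h1
    have step2 : (1 : ℝ) / 4 ≤ (1 - 1 / (2 * (n : ℝ))) ^ k := by
      exact le_trans hpow2n (pow_le_pow_of_le_one hbase0 hbase1 hk2n')
    have hsplit : a k * x ^ k = (a k * ρ ^ k) * (1 - 1 / (2 * (n : ℝ))) ^ k := by
      rw [hx, mul_pow]; ring
    rw [hsplit]
    have hbnd : (2 * (n : ℝ)) ^ ((3 : ℝ) / 2) ≤ 4 * (n : ℝ) ^ ((3 : ℝ) / 2) := by
      rw [Real.mul_rpow (by norm_num) hnpos.le]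
      have h4 : (2 : ℝ) ^ ((3 : ℝ) / 2) ≤ 4 := by
        have := Real.rpow_le_rpow_of_exponent_le (show (1:ℝ) ≤ 2 by norm_num)
          (show (3:ℝ)/2 ≤ 2 by norm_num)
        have h22 : (2 : ℝ) ^ (2 : ℝ) = 4 := by
          rw [show (2:ℝ) = ((2:ℕ):ℝ) by norm_num, Real.rpow_natCast]; norm_num
        linarith
      nlinarith
    have step1' : c / 2 / (4 * (n : ℝ) ^ ((3 : ℝ) / 2)) ≤ a k * ρ ^ k := by
      refine le_trans ?_ step1
      exact div_le_div_of_nonneg_left (by linarith) (by positivity) hbnd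
    have hρk : 0 ≤ a k * ρ ^ k := mul_nonneg (ha0 k) (pow_nonneg hρ.le _)
    calc c / 32 * ((n : ℝ) ^ ((3 : ℝ) / 2))⁻¹
        = (c / 2 / (4 * (n : ℝ) ^ ((3 : ℝ) / 2))) * (1 / 4) := by
          field_simp
          norm_num
      _ ≤ (a k * ρ ^ k) * (1 - 1 / (2 * (n : ℝ))) ^ k := by
          apply mul_le_mul step1' step2 (by norm_num) hρk
  -- window is nonempty and large
  have hABlt : A < B := by
    have : (A : ℝ) < B := by linarith
    exact_mod_cast this
  have hcard : ε * n ≤ ((Finset.Icc A B).card : ℝ) := by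
    rw [Nat.card_Icc]
    have hA1B : A ≤ B + 1 := by omega
    rw [Nat.cast_sub hA1B]
    push_cast
    linarith
  -- lower bound for the numerator
  have hnum : c / 32 * ε * (n : ℝ) ^ (-(1 : ℝ) / 2) ≤
      ∑ k ∈ Finset.Icc A B, a k * x ^ k := by
    have hsumlow := Finset.card_nsmul_le_sum (Finset.Icc A B)
      (fun k => a k * x ^ k) (c / 32 * ((n : ℝ) ^ ((3 : ℝ) / 2))⁻¹) hterm
    rw [nsmul_eq_mul] at hsumlow
    refine le_trans ?_ hsumlow
    have hn32pos : (0 : ℝ) < (n : ℝ) ^ ((3 : ℝ) / 2) := Real.rpow_pos_of_pos hnpos _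
    have hkey : (n : ℝ) * ((n : ℝ) ^ ((3 : ℝ) / 2))⁻¹ = (n : ℝ) ^ (-(1 : ℝ) / 2) := by
      rw [← Real.rpow_neg hnpos.le]
      rw [show (n : ℝ) * (n : ℝ) ^ (-((3 : ℝ) / 2)) =
        (n : ℝ) ^ (1 : ℝ) * (n : ℝ) ^ (-((3 : ℝ) / 2)) by rw [Real.rpow_one]]
      rw [← Real.rpow_add hnpos]
      norm_num
    calc c / 32 * ε * (n : ℝ) ^ (-(1 : ℝ) / 2)
        = (ε * n) * (c / 32 * ((n : ℝ) ^ ((3 : ℝ) / 2))⁻¹) := by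
          rw [← hkey]; ring
      _ ≤ ((Finset.Icc A B).card : ℝ) * (c / 32 * ((n : ℝ) ^ ((3 : ℝ) / 2))⁻¹) := by
          apply mul_le_mul_of_nonneg_right hcard (by positivity)
  -- denominator bounds
  have hsummable := hsum x hx0 hxρ
  have hden_le : (∑' k : ℕ, a k * x ^ k) ≤ M := hbound x hx0 hxρ
  have hnum_le_den : (∑ k ∈ Finset.Icc A B, a k * x ^ k) ≤ ∑' k : ℕ, a k * x ^ k :=
    Summable.sum_le_tsum _ (fun k _ => mul_nonneg (ha0 k) (pow_nonneg hx0.le _)) hsummable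
  have hnumpos : 0 < ∑ k ∈ Finset.Icc A B, a k * x ^ k := by
    refine lt_of_lt_of_le ?_ hnum
    have : (0:ℝ) < (n : ℝ) ^ (-(1 : ℝ) / 2) := Real.rpow_pos_of_pos hnpos _
    positivity
  have hdenpos : 0 < ∑' k : ℕ, a k * x ^ k := lt_of_lt_of_le hnumpos hnum_le_den
  -- conclude
  have hfinal : c / (32 * M) * ε * (n : ℝ) ^ (-(1 : ℝ) / 2) ≤
      (∑ k ∈ Finset.Icc A B, a k * x ^ k) / (∑' k : ℕ, a k * x ^ k) := by
    calc c / (32 * M) * ε * (n : ℝ) ^ (-(1 : ℝ) / 2)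
        = (c / 32 * ε * (n : ℝ) ^ (-(1 : ℝ) / 2)) / M := by
          field_simp
      _ ≤ (∑ k ∈ Finset.Icc A B, a k * x ^ k) / M := by
          apply div_le_div_of_nonneg_right hnum hM.le
      _ ≤ (∑ k ∈ Finset.Icc A B, a k * x ^ k) / (∑' k : ℕ, a k * x ^ k) :=
          div_le_div_of_nonneg_left hnumpos.le hdenpos hden_le
  exact hfinal
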